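/- arXiv:1208.6342 — 2 statements merged into one kernel-verified Lean document; each statement's English description precedes it below -/
import Mathlib

section
/- Let I be a {0,1}-word of length l ≥ 1, and let μ be the run of the Wolfram–Cook Turing machine M whose initial tape τ₀ is given (under the inclusion {0,1} ⊆ Σ_M) by τ₀(c) = u0 for c ≤ −2, τ₀(−1) = 0, τ₀(c) = I(c) for 0 ≤ c < l, and τ₀(c) = 0 for c ≥ l, with initial head position l and initial head state ∘. Then for every i ∈ ℕ there exists a time t ∈ ℕ with h_μ(t) = l + i; that is, the head eventually reaches every cell to the right of I. -/
namespace WolframCook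

/-- Tape alphabet of the Wolfram–Cook Turing machine: `0`, underlined `0`,
`?`, underlined `1`, `1`. -/
inductive Sym : Type
  | zero | uzero | quest | uone | one
  deriving DecidableEq

/-- Head states of the Wolfram–Cook Turing machine. -/
inductive HState : Type
  | circ | bullet
  deriving DecidableEq

/-- A configuration of the Wolfram–Cook Turing machine: a tape, a head
position and a head state. -/
structure Cfg : Type where
  tape : ℤ → Sym
  head : ℤ
  state : HState

/-- The step relation `C ⇝ C'` of the Wolfram–Cook Turing machine. -/
def Step (C C' : Cfg) : Prop :=
  (∀ c : ℤ, c ≠ C.head → C'.tape c = C.tape c) ∧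
  (C'.head = if C.tape C.head = Sym.zero ∨ C.tape C.head = Sym.one
    then C.head - 1 else C.head + 1) ∧
  (C'.state = if C.tape C.head = Sym.one ∨ C.tape C.head = Sym.uone
    then HState.bullet else HState.circ) ∧
  (C.state = HState.circ →
    ((C.tape C.head = Sym.zero ∧ C'.tape C.head = Sym.uzero) ∨
     (C.tape C.head = Sym.one ∧ C'.tape C.head = Sym.uone) ∨
     (C.tape C.head = Sym.uzero ∧ C'.tape C.head = Sym.zero) ∨
     (C.tape C.head = Sym.uone ∧ C'.tape C.head = Sym.one) ∨
     (C.tape C.head = Sym.quest ∧ C'.tape C.head = Sym.zero))) ∧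
  (C.state = HState.bullet →
    ((C.tape C.head = Sym.zero ∧ C'.tape C.head = Sym.uone) ∨
     (C.tape C.head = Sym.one ∧ C'.tape C.head = Sym.quest) ∨
     (C.tape C.head = Sym.uzero ∧ C'.tape C.head = Sym.zero) ∨
     (C.tape C.head = Sym.uone ∧ C'.tape C.head = Sym.one) ∨
     (C.tape C.head = Sym.quest ∧ C'.tape C.head = Sym.one)))


/-- A run of the Wolfram–Cook Turing machine: each configuration steps to
the next. -/
def IsRunM (μ : ℕ → Cfg) : Prop := ∀ t : ℕ, Step (μ t) (μ (t + 1))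

/-- The inclusion of `{0,1}` (as `Bool`) into the tape alphabet. -/
def boolSym : Bool → Sym
  | false => Sym.zero
  | true => Sym.one

/-- A symbol is "marked" if reading it makes the head move right. -/
def Mk (s : Sym) : Prop := s = Sym.uzero ∨ s = Sym.uone ∨ s = Sym.quest

lemma step_facts {C C' : Cfg} (h : Step C C') :
    (∀ c : ℤ, c ≠ C.head → C'.tape c = C.tape c) ∧
    (¬ Mk (C.tape C.head) → C'.head = C.head - 1 ∧ Mk (C'.tape C.head)) ∧
    (Mk (C.tape C.head) → C'.head = C.head + 1 ∧ ¬ Mk (C'.tape C.head)) := by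
  obtain ⟨h1, h2, h3, h4, h5⟩ := h
  refine ⟨h1, ?_, ?_⟩ <;>
  · intro hm
    rcases hs : C.state with _ | _
    · rcases h4 hs with ⟨ha, hb⟩ | ⟨ha, hb⟩ | ⟨ha, hb⟩ | ⟨ha, hb⟩ | ⟨ha, hb⟩ <;>
        simp_all [Mk]
    · rcases h5 hs with ⟨ha, hb⟩ | ⟨ha, hb⟩ | ⟨ha, hb⟩ | ⟨ha, hb⟩ | ⟨ha, hb⟩ <;>
        simp_all [Mk]

lemma left_sweep {μ : ℕ → Cfg} (hμ : IsRunM μ) (t : ℕ) (k : ℕ)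
    (h : ∀ j : ℕ, j < k → ¬ Mk ((μ t).tape ((μ t).head - j))) :
    (μ (t + k)).head = (μ t).head - k ∧
    (∀ j : ℕ, j < k → Mk ((μ (t + k)).tape ((μ t).head - j))) ∧
    (∀ c : ℤ, ((μ t).head < c ∨ c ≤ (μ t).head - k) →
      (μ (t + k)).tape c = (μ t).tape c) := by
  induction k with
  | zero => simp
  | succ k ih =>
    obtain ⟨H, M, U⟩ := ih (fun j hj => h j (by omega))
    set h0 := (μ t).head with hh0
    have htape : (μ (t + k)).tape (h0 - k) = (μ t).tape (h0 - k) := U _ (by omega)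
    have hun : ¬ Mk ((μ (t + k)).tape ((μ (t + k)).head)) := by
      rw [H, htape]; exact h k (by omega)
    obtain ⟨S1, S2, _⟩ := step_facts (hμ (t + k))
    obtain ⟨Sh, Sm⟩ := S2 hun
    have hstep : t + (k + 1) = (t + k) + 1 := by omega
    refine ⟨by rw [hstep, Sh, H]; push_cast; ring, ?_, ?_⟩
    · intro j hj
      rw [hstep]
      rcases Nat.lt_or_ge j k with hjk | hjk
      · rw [S1 _ (by rw [H]; intro hc; omega)]
        exact M j hjk
      · have : j = k := by omega
        subst this
        rwa [H] at Sm
    · intro c hc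
      rw [hstep, S1 _ (by rw [H]; push_cast at hc ⊢; omega)]
      exact U c (by push_cast at hc ⊢; omega)

lemma right_sweep {μ : ℕ → Cfg} (hμ : IsRunM μ) (t : ℕ) (k : ℕ)
    (h : ∀ j : ℕ, j < k → Mk ((μ t).tape ((μ t).head + j))) :
    (μ (t + k)).head = (μ t).head + k ∧
    (∀ j : ℕ, j < k → ¬ Mk ((μ (t + k)).tape ((μ t).head + j))) ∧
    (∀ c : ℤ, (c < (μ t).head ∨ (μ t).head + k ≤ c) →
      (μ (t + k)).tape c = (μ t).tape c) := by
  induction k with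
  | zero => simp
  | succ k ih =>
    obtain ⟨H, M, U⟩ := ih (fun j hj => h j (by omega))
    set h0 := (μ t).head with hh0
    have htape : (μ (t + k)).tape (h0 + k) = (μ t).tape (h0 + k) := U _ (by omega)
    have hmk : Mk ((μ (t + k)).tape ((μ (t + k)).head)) := by
      rw [H, htape]; exact h k (by omega)
    obtain ⟨S1, _, S3⟩ := step_facts (hμ (t + k))
    obtain ⟨Sh, Sm⟩ := S3 hmk
    have hstep : t + (k + 1) = (t + k) + 1 := by omega
    refine ⟨by rw [hstep, Sh, H]; push_cast; ring, ?_, ?_⟩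
    · intro j hj
      rw [hstep]
      rcases Nat.lt_or_ge j k with hjk | hjk
      · rw [S1 _ (by rw [H]; intro hc; omega)]
        exact M j hjk
      · have : j = k := by omega
        subst this
        rwa [H] at Sm
    · intro c hc
      rw [hstep, S1 _ (by rw [H]; push_cast at hc ⊢; omega)]
      exact U c (by push_cast at hc ⊢; omega)

/-- Invariant at the start of sweep `n`: head at `l+n`, everything left of
`-1-n` is marked, everything from `-1-n` on is plain. -/
def Inv (μ : ℕ → Cfg) (l : ℕ) (n : ℕ) (t : ℕ) : Prop :=
  (μ t).head = (l : ℤ) + n ∧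
  (∀ c : ℤ, c ≤ -2 - n → Mk ((μ t).tape c)) ∧
  (∀ c : ℤ, -1 - (n : ℤ) ≤ c → ¬ Mk ((μ t).tape c))

lemma inv_step {μ : ℕ → Cfg} (hμ : IsRunM μ) {l n t : ℕ}
    (h : Inv μ l n t) : ∃ t' : ℕ, Inv μ l (n + 1) t' := by
  obtain ⟨Hh, HM, HU⟩ := h
  set K : ℕ := l + 2 * n + 2 with hK
  -- left sweep
  obtain ⟨L1, L2, L3⟩ := left_sweep hμ t K (fun j hj => by
    apply HU; rw [Hh]; omega)
  set t1 := t + K with ht1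
  -- one step at the marked left boundary
  have hb : Mk ((μ t1).tape ((μ t1).head)) := by
    rw [L1, Hh]
    have : (l : ℤ) + n - K = -2 - n := by omega
    rw [this]
    rw [L3 _ (by rw [Hh]; omega)]
    exact HM _ (by omega)
  obtain ⟨S1, _, S3⟩ := step_facts (hμ t1)
  obtain ⟨Sh, Sm⟩ := S3 hb
  set t2 := t1 + 1 with ht2
  have Hh2 : (μ t2).head = -1 - (n : ℤ) := by
    rw [ht2, Sh, L1, Hh]; omega
  have Hh1 : (μ t1).head = -2 - (n : ℤ) := by
    rw [L1, Hh]; omega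
  -- right sweep
  obtain ⟨R1, R2, R3⟩ := right_sweep hμ t2 K (fun j hj => by
    rw [Hh2]
    rw [show (μ t2).tape = (μ (t1 + 1)).tape from rfl]
    rw [S1 _ (by rw [Hh1]; intro hc; omega)]
    have : (-1 - (n : ℤ) + j) = (μ t).head - ((K - 1 - j : ℕ) : ℤ) := by
      rw [Hh]; omega
    rw [this]
    exact L2 _ (by omega))
  refine ⟨t2 + K, ?_, ?_, ?_⟩
  · rw [R1, Hh2]; omega
  · intro c hc
    rw [R3 _ (by rw [Hh2]; left; omega)]
    rw [show (μ t2).tape = (μ (t1 + 1)).tape from rfl]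
    rw [S1 _ (by rw [Hh1]; intro h'; omega)]
    rw [L3 _ (by rw [Hh]; right; push_cast; omega)]
    exact HM _ (by omega)
  · intro c hc
    by_cases h1 : c = -2 - (n : ℤ)
    · rw [R3 _ (by rw [Hh2]; left; omega)]
      subst h1
      rw [ht2]
      rwa [Hh1] at Sm
    by_cases h2 : (l : ℤ) + n + 1 ≤ c
    · rw [R3 _ (by rw [Hh2]; right; push_cast; omega)]
      rw [show (μ t2).tape = (μ (t1 + 1)).tape from rfl]
      rw [S1 _ (by rw [Hh1]; intro h'; omega)]
      rw [L3 _ (by rw [Hh]; left; omega)]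
      exact HU _ (by omega)
    · -- middle: -1 - n ≤ c ≤ l + n
      have hc1 : -1 - (n : ℤ) ≤ c := by push_cast at hc; omega
      obtain ⟨j, hj1, hj2⟩ : ∃ j : ℕ, (j : ℤ) = c + 1 + n ∧ j < K := by
        refine ⟨(c + 1 + n).toNat, ?_, ?_⟩ <;> omega
      have : c = (μ t2).head + j := by rw [Hh2]; omega
      rw [this]
      exact R2 j hj2

/-- On Wolfram's initial tape `…u0 u0 0 I 0 0…` (with the head starting in
state `∘` on the cell immediately to the right of the input word `I`), the
head of the Wolfram–Cook Turing machine eventually reaches every cell to the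
right of `I`. -/
theorem head_reaches_every_right_cell (l : ℕ) (hl : 0 < l)
    (I : Fin l → Bool) (μ : ℕ → Cfg) (hμ : IsRunM μ)
    (htape₁ : ∀ c : ℤ, c ≤ -2 → (μ 0).tape c = Sym.uzero)
    (htape₂ : (μ 0).tape (-1) = Sym.zero)
    (htape₃ : ∀ j : Fin l, (μ 0).tape (j : ℤ) = boolSym (I j))
    (htape₄ : ∀ c : ℤ, (l : ℤ) ≤ c → (μ 0).tape c = Sym.zero)
    (hhead : (μ 0).head = (l : ℤ))
    (hstate : (μ 0).state = HState.circ) :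
    ∀ i : ℕ, ∃ t : ℕ, (μ t).head = (l : ℤ) + (i : ℤ) := by
  have base : Inv μ l 0 0 := by
    refine ⟨by simpa using hhead, ?_, ?_⟩
    · intro c hc
      rw [htape₁ c (by omega)]
      simp [Mk]
    · intro c hc
      by_cases h1 : c = -1
      · subst h1; rw [htape₂]; simp [Mk]
      by_cases h2 : (l : ℤ) ≤ c
      · rw [htape₄ c h2]; simp [Mk]
      · have hc0 : 0 ≤ c := by push_cast at hc; omega
        have hcl : c.toNat < l := by omega
        have := htape₃ ⟨c.toNat, hcl⟩
        simp only at this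
        rw [show ((c.toNat : ℤ)) = c from by omega] at this
        rw [this]
        cases I ⟨c.toNat, hcl⟩ <;> simp [boolSym, Mk]
  intro i
  have : ∃ t : ℕ, Inv μ l i t := by
    induction i with
    | zero => exact ⟨0, base⟩
    | succ n ih =>
      obtain ⟨t, ht⟩ := ih
      exact inv_step hμ ht
  obtain ⟨t, ht⟩ := this
  exact ⟨t, ht.1⟩


end WolframCook
end

section
/- (Wolfram's limited emulation) Let I be a {0,1}-word of length l ≥ 1. Let ρ be the run of the rule-110 cellular automaton R whose initial state is ρ_0(c) = I(c) for 0 ≤ c < l and ρ_0(c) = 0 otherwise. Let μ be the run of the Wolfram–Cook Turing machine M whose initial tape τ₀ is given by τ₀(c) = u0 for c ≤ −2, τ₀(−1) = 0, τ₀(c) = I(c) for 0 ≤ c < l, and τ₀(c) = 0 for c ≥ l, with initial head position l and initial head state ∘. For i ∈ ℕ let F(i) be the least time t with h_μ(t) = l + i (which exists), and let M(i) = τ_μ(F(i)). Then for every i ∈ ℕ and every cell c ∈ ℤ, M(i)(c) ∈ {0, u0, 1}, and ρ(i,c) = 1 if M(i)(c) = 1 while ρ(i,c) = 0 if M(i)(c)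 ∈ {0, u0}; that is, the i-th state of R is obtained from M(i) by replacing u0's by 0's. -/
namespace WolframCook

/-- A run of the rule-110 cellular automaton (cells hold `true`/`false` for
`1`/`0`). -/
def IsRun110 (ρ : ℕ → ℤ → Bool) : Prop :=
  ∀ (t : ℕ) (c : ℤ),
    (ρ (t + 1) c ≠ ρ t c) ↔
      ((ρ t c = false ∧ ρ t (c + 1) = true) ∨
       (ρ t (c - 1) = true ∧ ρ t c = true ∧ ρ t (c + 1) = true))

section Aux

/-- The local rule of rule 110. -/
def rule (a b c : Bool) : Bool := if b then !(a && c) else c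

/-- Symbol left on cell `c` by the leftward sweep of cycle `i`. -/
def usym (ρ : ℕ → ℤ → Bool) (i : ℕ) (c : ℤ) : Sym :=
  if ρ i c && ρ i (c + 1) then Sym.quest
  else if ρ (i + 1) c then Sym.uone else Sym.uzero

/-- Configuration during the leftward sweep of cycle `i`, head at `p`. -/
def LConf (l : ℕ) (ρ : ℕ → ℤ → Bool) (i : ℕ) (p : ℤ) (C : Cfg) : Prop :=
  C.head = p ∧
  (C.state = HState.bullet ↔ ρ i (p + 1) = true) ∧
  (∀ c : ℤ, c ≤ -2 - (i : ℤ) → C.tape c = Sym.uzero) ∧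
  (∀ c : ℤ, -1 - (i : ℤ) ≤ c → c ≤ p → C.tape c = boolSym (ρ i c)) ∧
  (∀ c : ℤ, p < c → c ≤ (l : ℤ) + (i : ℤ) → C.tape c = usym ρ i c) ∧
  (∀ c : ℤ, (l : ℤ) + (i : ℤ) < c → C.tape c = Sym.zero)

/-- Configuration during the rightward sweep of cycle `i`, head at `p`. -/
def RConf (l : ℕ) (ρ : ℕ → ℤ → Bool) (i : ℕ) (p : ℤ) (C : Cfg) : Prop :=
  C.head = p ∧
  (C.state = HState.bullet ↔ usym ρ i (p - 1) = Sym.uone) ∧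
  (∀ c : ℤ, c ≤ -3 - (i : ℤ) → C.tape c = Sym.uzero) ∧
  (∀ c : ℤ, -2 - (i : ℤ) ≤ c → c < p → C.tape c = boolSym (ρ (i + 1) c)) ∧
  (∀ c : ℤ, p ≤ c → c ≤ (l : ℤ) + (i : ℤ) → C.tape c = usym ρ i c) ∧
  (∀ c : ℤ, (l : ℤ) + (i : ℤ) < c → C.tape c = Sym.zero)

/-- Cycle start times. -/
def Tt (l : ℕ) : ℕ → ℕ
  | 0 => 0
  | i + 1 => Tt l i + (2 * l + 4 * i + 5)

variable {l : ℕ} {ρ : ℕ → ℤ → Bool}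

lemma left_step (hrule : ∀ i c, ρ (i + 1) c = rule (ρ i (c - 1)) (ρ i c) (ρ i (c + 1)))
    {i : ℕ} {p : ℤ} {C C' : Cfg}
    (hp1 : -1 - (i : ℤ) ≤ p) (hp2 : p ≤ (l : ℤ) + (i : ℤ))
    (hC : LConf l ρ i p C) (hS : Step C C') : LConf l ρ i (p - 1) C' := by
  obtain ⟨hh, hst, t1, t2, t3, t4⟩ := hC
  obtain ⟨s1, s2, s3, s4, s5⟩ := hS
  rw [hh] at s1 s2 s3 s4 s5
  have hread : C.tape p = boolSym (ρ i p) := t2 p hp1 le_rfl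
  have key : C'.head = p - 1 ∧ (C'.state = HState.bullet ↔ ρ i p = true) ∧
      C'.tape p = usym ρ i p := by
    rcases hb : ρ i p with _ | _
    · -- reading `0`
      have hrd : C.tape p = Sym.zero := by rw [hread, hb]; rfl
      refine ⟨by rw [s2, hrd]; simp, by rw [s3, hrd]; simp, ?_⟩
      have hus : usym ρ i p = if ρ i (p + 1) then Sym.uone else Sym.uzero := by
        have h : ρ (i + 1) p = ρ i (p + 1) := by rw [hrule]; simp [rule, hb]
        simp [usym, hb, h]
      cases hq : C.state with
      | circ =>
        have h1 : ρ i (p + 1) = false := by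
          rcases h : ρ i (p + 1)
          · rfl
          · exact absurd (hst.mpr h) (by rw [hq]; simp)
        rcases s4 hq with ⟨_, h⟩ | ⟨hx, _⟩ | ⟨hx, _⟩ | ⟨hx, _⟩ | ⟨hx, _⟩
        · rw [hus, h1]; simpa using h
        all_goals simp [hrd] at hx
      | bullet =>
        have h1 : ρ i (p + 1) = true := hst.mp hq
        rcases s5 hq with ⟨_, h⟩ | ⟨hx, _⟩ | ⟨hx, _⟩ | ⟨hx, _⟩ | ⟨hx, _⟩
        · rw [hus, h1]; simpa using h
        all_goals simp [hrd] at hx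
    · -- reading `1`
      have hrd : C.tape p = Sym.one := by rw [hread, hb]; rfl
      refine ⟨by rw [s2, hrd]; simp, by rw [s3, hrd]; simp [hb], ?_⟩
      cases hq : C.state with
      | circ =>
        have h1 : ρ i (p + 1) = false := by
          rcases h : ρ i (p + 1)
          · rfl
          · exact absurd (hst.mpr h) (by rw [hq]; simp)
        have hr : ρ (i + 1) p = true := by rw [hrule]; simp [rule, hb, h1]
        rcases s4 hq with ⟨hx, _⟩ | ⟨_, h⟩ | ⟨hx, _⟩ | ⟨hx, _⟩ | ⟨hx, _⟩
        · simp [hrd] at hx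
        · simpa [usym, hb, h1, hr] using h
        all_goals simp [hrd] at hx
      | bullet =>
        have h1 : ρ i (p + 1) = true := hst.mp hq
        rcases s5 hq with ⟨hx, _⟩ | ⟨_, h⟩ | ⟨hx, _⟩ | ⟨hx, _⟩ | ⟨hx, _⟩
        · simp [hrd] at hx
        · simpa [usym, hb, h1] using h
        all_goals simp [hrd] at hx
  obtain ⟨hhd, hst2, hwr⟩ := key
  refine ⟨hhd, by rw [show p - 1 + 1 = p by ring]; exact hst2, ?_, ?_, ?_, ?_⟩
  · intro c hc
    rw [s1 c (by omega)]; exact t1 c hc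
  · intro c hc1 hc2
    rw [s1 c (by omega)]; exact t2 c hc1 (by omega)
  · intro c hc1 hc2
    by_cases hcp : c = p
    · rw [hcp]; exact hwr
    · rw [s1 c hcp]; exact t3 c (by omega) hc2
  · intro c hc
    rw [s1 c (by omega)]; exact t4 c hc

lemma turn_step
    (hsupp : ∀ (i : ℕ) (c : ℤ), (c < -(i : ℤ) ∨ (l : ℤ) ≤ c) → ρ i c = false)
    {i : ℕ} {C C' : Cfg}
    (hC : LConf l ρ i (-2 - (i : ℤ)) C) (hS : Step C C') :
    RConf l ρ i (-1 - (i : ℤ)) C' := by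
  obtain ⟨hh, hst, t1, t2, t3, t4⟩ := hC
  obtain ⟨s1, s2, s3, s4, s5⟩ := hS
  rw [hh] at s1 s2 s3 s4 s5
  have hrd : C.tape (-2 - (i : ℤ)) = Sym.uzero := t1 _ le_rfl
  have hhd : C'.head = -1 - (i : ℤ) := by rw [s2, hrd]; simp; ring
  have hst' : C'.state = HState.circ := by rw [s3, hrd]; simp
  have hwr : C'.tape (-2 - (i : ℤ)) = Sym.zero := by
    cases hq : C.state with
    | circ =>
      rcases s4 hq with ⟨hx, _⟩ | ⟨hx, _⟩ | ⟨_, h⟩ | ⟨hx, _⟩ | ⟨hx, _⟩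
      · simp [hrd] at hx
      · simp [hrd] at hx
      · exact h
      all_goals simp [hrd] at hx
    | bullet =>
      rcases s5 hq with ⟨hx, _⟩ | ⟨hx, _⟩ | ⟨_, h⟩ | ⟨hx, _⟩ | ⟨hx, _⟩
      · simp [hrd] at hx
      · simp [hrd] at hx
      · exact h
      all_goals simp [hrd] at hx
  have hus : usym ρ i (-1 - (i : ℤ) - 1) = Sym.uzero := by
    have h1 : ρ i (-1 - (i : ℤ) - 1) = false := hsupp i _ (Or.inl (by omega))
    have h2 : ρ (i + 1) (-1 - (i : ℤ) - 1) = false :=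
      hsupp (i + 1) _ (Or.inl (by push_cast; omega))
    simp [usym, h1, h2]
  refine ⟨hhd, by rw [hst', hus]; simp, ?_, ?_, ?_, ?_⟩
  · intro c hc
    rw [s1 c (by omega)]; exact t1 c (by omega)
  · intro c hc1 hc2
    have hcp : c = -2 - (i : ℤ) := by omega
    rw [hcp, hwr]
    have h2 : ρ (i + 1) (-2 - (i : ℤ)) = false :=
      hsupp (i + 1) _ (Or.inl (by push_cast; omega))
    rw [h2]; rfl
  · intro c hc1 hc2
    rw [s1 c (by omega)]; exact t3 c (by omega) hc2
  · intro c hc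
    rw [s1 c (by omega)]; exact t4 c hc

lemma right_step (hrule : ∀ i c, ρ (i + 1) c = rule (ρ i (c - 1)) (ρ i c) (ρ i (c + 1)))
    {i : ℕ} {p : ℤ} {C C' : Cfg}
    (hp1 : -1 - (i : ℤ) ≤ p) (hp2 : p ≤ (l : ℤ) + (i : ℤ))
    (hC : RConf l ρ i p C) (hS : Step C C') : RConf l ρ i (p + 1) C' := by
  obtain ⟨hh, hst, t1, t2, t3, t4⟩ := hC
  obtain ⟨s1, s2, s3, s4, s5⟩ := hS
  rw [hh] at s1 s2 s3 s4 s5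
  have hread : C.tape p = usym ρ i p := t3 p le_rfl hp2
  have key : C'.head = p + 1 ∧
      (C'.state = HState.bullet ↔ usym ρ i p = Sym.uone) ∧
      C'.tape p = boolSym (ρ (i + 1) p) := by
    by_cases hq : (ρ i p && ρ i (p + 1)) = true
    · -- cell holds `?`
      have hb : ρ i p = true := by
        rcases h : ρ i p
        · rw [h] at hq; simp at hq
        · rfl
      have hb1 : ρ i (p + 1) = true := by
        rcases h : ρ i (p + 1)
        · rw [h] at hq; simp at hq
        · rfl
      have hus : usym ρ i p = Sym.quest := by simp [usym, hq]
      have hrd : C.tape p = Sym.quest := by rw [hread, hus]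
      refine ⟨by rw [s2, hrd]; simp, by rw [s3, hrd, hus]; simp, ?_⟩
      have hval : ρ (i + 1) p = true ↔ usym ρ i (p - 1) = Sym.uone := by
        have hr : ρ (i + 1) p = !(ρ i (p - 1)) := by
          rw [hrule]; simp [rule, hb, hb1]
        rcases ha : ρ i (p - 1) with _ | _
        · have hr1 : ρ (i + 1) (p - 1) = true := by
            rw [hrule, show p - 1 + 1 = p by ring]; simp [rule, ha, hb]
          simp [hr, ha, usym, hr1, show p - 1 + 1 = p by ring, hb]
        · simp [hr, ha, usym, show p - 1 + 1 = p by ring, hb]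
      cases hq2 : C.state with
      | circ =>
        have h1 : ρ (i + 1) p = false := by
          rcases h : ρ (i + 1) p
          · rfl
          · exact absurd (hst.mpr (hval.mp h)) (by rw [hq2]; simp)
        rcases s4 hq2 with ⟨hx, _⟩ | ⟨hx, _⟩ | ⟨hx, _⟩ | ⟨hx, _⟩ | ⟨_, h⟩
        · simp [hrd] at hx
        · simp [hrd] at hx
        · simp [hrd] at hx
        · simp [hrd] at hx
        · rw [h]; simp [boolSym, h1]
      | bullet =>
        have h1 : ρ (i + 1) p = true := hval.mpr (hst.mp hq2)
        rcases s5 hq2 with ⟨hx, _⟩ | ⟨hx, _⟩ | ⟨hx, _⟩ | ⟨hx, _⟩ | ⟨_, h⟩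
        · simp [hrd] at hx
        · simp [hrd] at hx
        · simp [hrd] at hx
        · simp [hrd] at hx
        · rw [h]; simp [boolSym, h1]
    · rcases hr : ρ (i + 1) p with _ | _
      · -- cell holds `u0`
        have hus : usym ρ i p = Sym.uzero := by simp [usym, hq, hr]
        have hrd : C.tape p = Sym.uzero := by rw [hread, hus]
        refine ⟨by rw [s2, hrd]; simp, by rw [s3, hrd, hus]; simp, ?_⟩
        cases hq2 : C.state with
        | circ =>
          rcases s4 hq2 with ⟨hx, _⟩ | ⟨hx, _⟩ | ⟨_, h⟩ | ⟨hx, _⟩ | ⟨hx, _⟩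
          · simp [hrd] at hx
          · simp [hrd] at hx
          · rw [h]; simp [boolSym, hr]
          all_goals simp [hrd] at hx
        | bullet =>
          rcases s5 hq2 with ⟨hx, _⟩ | ⟨hx, _⟩ | ⟨_, h⟩ | ⟨hx, _⟩ | ⟨hx, _⟩
          · simp [hrd] at hx
          · simp [hrd] at hx
          · rw [h]; simp [boolSym, hr]
          all_goals simp [hrd] at hx
      · -- cell holds `u1`
        have hus : usym ρ i p = Sym.uone := by simp [usym, hq, hr]
        have hrd : C.tape p = Sym.uone := by rw [hread, hus]
        refine ⟨by rw [s2, hrd]; simp, by rw [s3, hrd, hus]; simp, ?_⟩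
        cases hq2 : C.state with
        | circ =>
          rcases s4 hq2 with ⟨hx, _⟩ | ⟨hx, _⟩ | ⟨hx, _⟩ | ⟨_, h⟩ | ⟨hx, _⟩
          · simp [hrd] at hx
          · simp [hrd] at hx
          · simp [hrd] at hx
          · rw [h]; simp [boolSym, hr]
          · simp [hrd] at hx
        | bullet =>
          rcases s5 hq2 with ⟨hx, _⟩ | ⟨hx, _⟩ | ⟨hx, _⟩ | ⟨_, h⟩ | ⟨hx, _⟩
          · simp [hrd] at hx
          · simp [hrd] at hx
          · simp [hrd] at hx
          · rw [h]; simp [boolSym, hr]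
          · simp [hrd] at hx
  obtain ⟨hhd, hst2, hwr⟩ := key
  refine ⟨hhd, by rw [show p + 1 - 1 = p by ring]; exact hst2, ?_, ?_, ?_, ?_⟩
  · intro c hc
    rw [s1 c (by omega)]; exact t1 c hc
  · intro c hc1 hc2
    by_cases hcp : c = p
    · rw [hcp]; exact hwr
    · rw [s1 c hcp]; exact t2 c hc1 (by omega)
  · intro c hc1 hc2
    rw [s1 c (by omega)]; exact t3 c (by omega) hc2
  · intro c hc
    rw [s1 c (by omega)]; exact t4 c hc

end Aux

section Aux2

variable {l : ℕ} {ρ : ℕ → ℤ → Bool}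

lemma R_to_L
    (hsupp : ∀ (i : ℕ) (c : ℤ), (c < -(i : ℤ) ∨ (l : ℤ) ≤ c) → ρ i c = false)
    {i : ℕ} {C : Cfg}
    (hC : RConf l ρ i ((l : ℤ) + (i : ℤ) + 1) C) :
    LConf l ρ (i + 1) ((l : ℤ) + (i : ℤ) + 1) C := by
  obtain ⟨hh, hst, t1, t2, t3, t4⟩ := hC
  have hus : usym ρ i ((l : ℤ) + (i : ℤ)) = Sym.uzero := by
    have h1 : ρ i ((l : ℤ) + (i : ℤ)) = false := hsupp i _ (Or.inr (by omega))
    have h2 : ρ (i + 1) ((l : ℤ) + (i : ℤ)) = false :=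
      hsupp (i + 1) _ (Or.inr (by omega))
    simp [usym, h1, h2]
  rw [show (l : ℤ) + (i : ℤ) + 1 - 1 = (l : ℤ) + (i : ℤ) from by ring] at hst
  have hst' : C.state = HState.circ := by
    cases hq : C.state with
    | circ => rfl
    | bullet => rw [hst.mp hq] at hus; simp at hus
  refine ⟨hh, ?_, ?_, ?_, ?_, ?_⟩
  · rw [hst']
    have : ρ (i + 1) ((l : ℤ) + (i : ℤ) + 1 + 1) = false :=
      hsupp (i + 1) _ (Or.inr (by omega))
    simp [this]
  · intro c hc
    exact t1 c (by push_cast at hc ⊢; omega)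
  · intro c hc1 hc2
    by_cases hcp : c < (l : ℤ) + (i : ℤ) + 1
    · exact t2 c (by push_cast at hc1 ⊢; omega) hcp
    · have hcc : c = (l : ℤ) + (i : ℤ) + 1 := by omega
      rw [hcc, t4 _ (by omega)]
      have : ρ (i + 1) ((l : ℤ) + (i : ℤ) + 1) = false :=
        hsupp (i + 1) _ (Or.inr (by omega))
      rw [this]; rfl
  · intro c hc1 hc2
    exfalso; push_cast at hc2; omega
  · intro c hc
    exact t4 c (by push_cast at hc; omega)

lemma cycle {μ : ℕ → Cfg} (hμ : IsRunM μ)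
    (hrule : ∀ i c, ρ (i + 1) c = rule (ρ i (c - 1)) (ρ i c) (ρ i (c + 1)))
    (hsupp : ∀ (i : ℕ) (c : ℤ), (c < -(i : ℤ) ∨ (l : ℤ) ≤ c) → ρ i c = false)
    {i s : ℕ} (hC : LConf l ρ i ((l : ℤ) + (i : ℤ)) (μ s)) :
    LConf l ρ (i + 1) ((l : ℤ) + (i : ℤ) + 1) (μ (s + (2 * l + 4 * i + 5))) ∧
    ∀ t, s ≤ t → t < s + (2 * l + 4 * i + 5) → (μ t).head ≤ (l : ℤ) + (i : ℤ) := by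
  have down : ∀ k : ℕ, k ≤ l + 2 * i + 2 →
      LConf l ρ i ((l : ℤ) + (i : ℤ) - (k : ℤ)) (μ (s + k)) := by
    intro k
    induction k with
    | zero => intro _; simpa using hC
    | succ n ih =>
      intro hk
      have hn := ih (by omega)
      have h2 := left_step hrule (p := (l : ℤ) + (i : ℤ) - (n : ℤ))
        (by push_cast; omega) (by push_cast; omega) hn (hμ (s + n))
      have he : (l : ℤ) + (i : ℤ) - (n : ℤ) - 1 = (l : ℤ) + (i : ℤ) - ((n + 1 : ℕ) : ℤ) := by
        push_cast; ring
      rw [he] at h2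
      exact h2
  have hturn0 := down (l + 2 * i + 2) le_rfl
  have he : (l : ℤ) + (i : ℤ) - ((l + 2 * i + 2 : ℕ) : ℤ) = -2 - (i : ℤ) := by
    push_cast; ring
  rw [he] at hturn0
  have hturn := turn_step hsupp hturn0 (hμ (s + (l + 2 * i + 2)))
  have hteq : s + (l + 2 * i + 2) + 1 = s + (l + 2 * i + 3) := by omega
  rw [hteq] at hturn
  have up : ∀ k : ℕ, k ≤ l + 2 * i + 2 →
      RConf l ρ i (-1 - (i : ℤ) + (k : ℤ)) (μ (s + (l + 2 * i + 3) + k)) := by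
    intro k
    induction k with
    | zero => intro _; simpa using hturn
    | succ n ih =>
      intro hk
      have hn := ih (by omega)
      have h2 := right_step hrule (p := -1 - (i : ℤ) + (n : ℤ))
        (by push_cast; omega) (by push_cast; omega) hn (hμ (s + (l + 2 * i + 3) + n))
      have he2 : -1 - (i : ℤ) + (n : ℤ) + 1 = -1 - (i : ℤ) + ((n + 1 : ℕ) : ℤ) := by
        push_cast; ring
      rw [he2] at h2
      exact h2
  have hfin := up (l + 2 * i + 2) le_rfl
  have he3 : -1 - (i : ℤ) + ((l + 2 * i + 2 : ℕ) : ℤ) = (l : ℤ) + (i : ℤ) + 1 := by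
    push_cast; ring
  have he4 : s + (l + 2 * i + 3) + (l + 2 * i + 2) = s + (2 * l + 4 * i + 5) := by omega
  rw [he3, he4] at hfin
  refine ⟨R_to_L hsupp hfin, ?_⟩
  intro t ht1 ht2
  rcases le_or_gt (t - s) (l + 2 * i + 2) with hk | hk
  · have h := (down (t - s) hk).1
    rw [show s + (t - s) = t by omega] at h
    rw [h]
    omega
  · have hk2 : t - s - (l + 2 * i + 3) ≤ l + 2 * i + 2 := by omega
    have h := (up (t - s - (l + 2 * i + 3)) hk2).1
    rw [show s + (l + 2 * i + 3) + (t - s - (l + 2 * i + 3)) = t by omega] at h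
    rw [h]
    have : (↑(t - s - (l + 2 * i + 3)) : ℤ) ≤ (l : ℤ) + 2 * i + 1 := by
      have : t - s - (l + 2 * i + 3) ≤ l + 2 * i + 1 := by omega
      exact_mod_cast Nat.cast_le.mpr this
    omega

end Aux2

/-- (Wolfram's limited emulation.)  Let `ρ` be the rule-110 run whose initial
state is the word `I` surrounded by `0`s, and let `μ` be the run of the
Wolfram–Cook Turing machine on the initial tape `…u0 u0 0 I 0 0…` with the
head starting in state `∘` on the cell immediately to the right of `I`.  If
`F i` is the least time at which the head is on cell `l + i`, and
`M i = τ_μ(F i)` is the tape at that time, then every symbol of `M i` is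
`0`, `u0` or `1`, and the `i`-th state of `ρ` is obtained from `M i` by
replacing `u0`s by `0`s. -/
theorem wolfram_limited_emulation (l : ℕ) (hl : 0 < l) (I : Fin l → Bool)
    (ρ : ℕ → ℤ → Bool) (hρ : IsRun110 ρ)
    (hρ0 : ∀ c : ℤ,
      ρ 0 c = if h : 0 ≤ c ∧ c < (l : ℤ) then I ⟨c.toNat, by omega⟩ else false)
    (μ : ℕ → Cfg) (hμ : IsRunM μ)
    (htape₁ : ∀ c : ℤ, c ≤ -2 → (μ 0).tape c = Sym.uzero)
    (htape₂ : (μ 0).tape (-1) = Sym.zero)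
    (htape₃ : ∀ j : Fin l, (μ 0).tape (j : ℤ) = boolSym (I j))
    (htape₄ : ∀ c : ℤ, (l : ℤ) ≤ c → (μ 0).tape c = Sym.zero)
    (hhead : (μ 0).head = (l : ℤ))
    (hstate : (μ 0).state = HState.circ)
    (F : ℕ → ℕ)
    (hF : ∀ i : ℕ, (μ (F i)).head = (l : ℤ) + (i : ℤ) ∧
      ∀ t : ℕ, (μ t).head = (l : ℤ) + (i : ℤ) → F i ≤ t) :
    ∀ (i : ℕ) (c : ℤ),
      ((μ (F i)).tape c = Sym.zero ∨ (μ (F i)).tape c = Sym.uzero ∨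
        (μ (F i)).tape c = Sym.one) ∧
      ((μ (F i)).tape c = Sym.one → ρ i c = true) ∧
      (((μ (F i)).tape c = Sym.zero ∨ (μ (F i)).tape c = Sym.uzero) →
        ρ i c = false) := by
  -- rule-110 as a function
  have hrule : ∀ i c, ρ (i + 1) c = rule (ρ i (c - 1)) (ρ i c) (ρ i (c + 1)) := by
    intro i c
    have h := hρ i c
    rcases ha : ρ i (c - 1) <;> rcases hb : ρ i c <;> rcases hc : ρ i (c + 1) <;>
      simp [ha, hb, hc, rule] at h ⊢ <;> simp [h]
  -- support of ρ
  have hsupp : ∀ (i : ℕ) (c : ℤ), (c < -(i : ℤ) ∨ (l : ℤ) ≤ c) → ρ i c = false := by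
    intro i
    induction i with
    | zero =>
      intro c hc
      rw [hρ0 c, dif_neg (by push_cast at hc; omega)]
    | succ n ih =>
      intro c hc
      rw [hrule]
      have h1 : ρ n c = false := ih c (by push_cast at hc ⊢; omega)
      have h2 : ρ n (c + 1) = false := ih (c + 1) (by push_cast at hc ⊢; omega)
      simp [rule, h1, h2]
  -- the initial configuration
  have hbase : LConf l ρ 0 ((l : ℤ) + (0 : ℤ)) (μ 0) := by
    refine ⟨by rw [hhead]; ring, ?_, ?_, ?_, ?_, ?_⟩
    · rw [hstate]
      have h0 : ρ 0 ((l : ℤ) + 1) = false := hsupp 0 _ (Or.inr (by omega))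
      simp [h0]
    · intro c hc
      exact htape₁ c (by push_cast at hc; omega)
    · intro c hc1 hc2
      push_cast at hc1 hc2
      rcases lt_or_ge c 0 with hc0 | hc0
      · have hcc : c = -1 := by omega
        rw [hcc, htape₂]
        have : ρ 0 (-1) = false := hsupp 0 _ (Or.inl (by omega))
        rw [this]; rfl
      · rcases lt_or_ge c (l : ℤ) with hcl | hcl
        · rw [hρ0 c, dif_pos ⟨hc0, hcl⟩]
          have h3 := htape₃ ⟨c.toNat, by omega⟩
          convert h3 using 2
          simp
          omega
        · rw [htape₄ c hcl]
          have : ρ 0 c = false := hsupp 0 _ (Or.inr hcl)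
          rw [this]; rfl
    · intro c hc1 hc2
      exfalso; omega
    · intro c hc
      exact htape₄ c (by omega)
  -- the main induction: at time `Tt l i` we are at the start of cycle `i`
  have main : ∀ i : ℕ, LConf l ρ i ((l : ℤ) + (i : ℤ)) (μ (Tt l i)) ∧
      ∀ t, t < Tt l i → (μ t).head < (l : ℤ) + (i : ℤ) := by
    intro i
    induction i with
    | zero => exact ⟨hbase, fun t ht => absurd ht (by simp [Tt])⟩
    | succ n ih =>
      obtain ⟨h1, h2⟩ := ih
      obtain ⟨hL, hb⟩ := cycle hμ hrule hsupp h1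
      constructor
      · have he : (l : ℤ) + ((n + 1 : ℕ) : ℤ) = (l : ℤ) + (n : ℤ) + 1 := by push_cast; ring
        rw [he]
        exact hL
      · intro t ht
        have hT : Tt l (n + 1) = Tt l n + (2 * l + 4 * n + 5) := rfl
        rw [hT] at ht
        rcases lt_or_ge t (Tt l n) with h | h
        · have := h2 t h
          push_cast; omega
        · have := hb t h ht
          push_cast; omega
  -- identify F with Tt
  have hFT : ∀ i : ℕ, F i = Tt l i := by
    intro i
    have hhd : (μ (Tt l i)).head = (l : ℤ) + (i : ℤ) := (main i).1.1
    have h1 : F i ≤ Tt l i := (hF i).2 _ hhd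
    have h2 : ¬ F i < Tt l i := by
      intro h
      have := (main i).2 _ h
      rw [(hF i).1] at this
      omega
    omega
  -- conclude
  intro i c
  rw [hFT i]
  obtain ⟨_, _, t1, t2, t3, t4⟩ := (main i).1
  rcases le_or_gt c (-2 - (i : ℤ)) with hc | hc
  · have hz : ρ i c = false := hsupp i c (Or.inl (by omega))
    rw [t1 c hc]
    exact ⟨Or.inr (Or.inl rfl), by simp, fun _ => hz⟩
  · rcases le_or_gt c ((l : ℤ) + (i : ℤ)) with hc2 | hc2
    · rw [t2 c (by omega) hc2]
      rcases hb : ρ i c with _ | _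
      · exact ⟨Or.inl rfl, by simp [boolSym], fun _ => rfl⟩
      · refine ⟨Or.inr (Or.inr rfl), fun _ => rfl, ?_⟩
        intro h
        rcases h with h | h <;> simp [boolSym] at h
    · have hz : ρ i c = false := hsupp i c (Or.inr (by omega))
      rw [t4 c hc2]
      exact ⟨Or.inl rfl, by simp, fun _ => hz⟩


end WolframCook
end
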